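/- Let D be the ℂ-derivation of ℂ[X, Y, Z] given by D = −2Yσ·∂/∂X + Zσ·∂/∂Y, where σ = XZ + Y². Then D(σ) = 0, D^[3](X) = D^[3](Y) = D^[3](Z) = 0, and D^[2](X) ≠ 0 (so 3 is the least m with D^[m] vanishing on all three variables); moreover D is locally nilpotent. -/
import Mathlib

open MvPolynomial

private lemma iter_zero {P : Type*} [CommRing P] [Algebra ℂ P] (D : Derivation ℂ P P) (n : ℕ) :
    (⇑D)^[n] 0 = 0 := Function.iterate_fixed (map_zero D) n

private lemma iter_add {P : Type*} [CommRing P] [Algebra ℂ P] (D : Derivation ℂ P P) (n : ℕ) (a b : P) :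
    (⇑D)^[n] (a + b) = (⇑D)^[n] a + (⇑D)^[n] b := by
  induction n generalizing a b with
  | zero => simp
  | succ n ih => simp [Function.iterate_succ_apply, map_add, ih]

private lemma iter_mono {P : Type*} [CommRing P] [Algebra ℂ P] (D : Derivation ℂ P P) {n m : ℕ} (h : n ≤ m)
    {a : P} (ha : (⇑D)^[n] a = 0) : (⇑D)^[m] a = 0 := by
  obtain ⟨k, rfl⟩ := Nat.exists_eq_add_of_le h
  rw [Nat.add_comm, Function.iterate_add_apply, ha, iter_zero]

private lemma nilmul {P : Type*} [CommRing P] [Algebra ℂ P] (D : Derivation ℂ P P) :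
    ∀ k n m (a b : P), n + m = k → (⇑D)^[n] a = 0 → (⇑D)^[m] b = 0 →
      (⇑D)^[k] (a * b) = 0 := by
  intro k
  induction k using Nat.strong_induction_on with
  | _ k ih =>
    intro n m a b hk ha hb
    match n, m with
    | 0, m =>
      simp only [Function.iterate_zero, id] at ha
      subst ha; subst hk
      simp [iter_zero]
    | n + 1, 0 =>
      simp only [Function.iterate_zero, id] at hb
      subst hb; subst hk
      simp [iter_zero]
    | n + 1, m + 1 =>
      subst hk
      have hk1 : n + 1 + (m + 1) = (n + 1 + m) + 1 := by ring
      rw [hk1, Function.iterate_succ_apply, D.leibniz, smul_eq_mul, smul_eq_mul,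
        iter_add]
      have h1 : (⇑D)^[n + 1 + m] (a * D b) = 0 := by
        refine ih _ (by omega) (n+1) m a (D b) rfl ha ?_
        rw [← Function.iterate_succ_apply]; exact hb
      have h2 : (⇑D)^[n + 1 + m] (b * D a) = 0 := by
        refine ih _ (by omega) (m+1) n b (D a) (by ring) hb ?_
        rw [← Function.iterate_succ_apply]; exact ha
      rw [h1, h2, add_zero]

open MvPolynomial in
theorem nagata_derivation_properties
    (D : Derivation ℂ (MvPolynomial (Fin 3) ℂ) (MvPolynomial (Fin 3) ℂ))
    (σ : MvPolynomial (Fin 3) ℂ) (hσ : σ = X 0 * X 2 + X 1 ^ 2)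
    (hX : D (X 0) = -2 * X 1 * σ)
    (hY : D (X 1) = X 2 * σ)
    (hZ : D (X 2) = 0) :
    D σ = 0 ∧
      (∀ i : Fin 3, (⇑D)^[3] (X i) = 0) ∧
      (⇑D)^[2] (X 0) ≠ 0 ∧
      (∀ m : ℕ, (∀ i : Fin 3, (⇑D)^[m] (X i) = 0) → 3 ≤ m) ∧
      (∀ a : MvPolynomial (Fin 3) ℂ, ∃ n : ℕ, (⇑D)^[n] a = 0) := by
  have hD2 : D (2 : MvPolynomial (Fin 3) ℂ) = 0 := by
    rw [show (2 : MvPolynomial (Fin 3) ℂ) = 1 + 1 by norm_num]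
    simp
  have hDn2 : D (-2 : MvPolynomial (Fin 3) ℂ) = 0 := by
    rw [show (-2 : MvPolynomial (Fin 3) ℂ) = -(2) by norm_num, map_neg, hD2, neg_zero]
  have hσ0 : D σ = 0 := by
    rw [hσ, map_add, pow_two, D.leibniz, D.leibniz, hX, hY, hZ]
    simp only [smul_eq_mul]
    ring
  have h2X : (⇑D)^[2] (X 0) = -2 * X 2 * σ ^ 2 := by
    show D (D (X 0)) = _
    rw [hX, show (-2 : MvPolynomial (Fin 3) ℂ) * X 1 * σ = (-2) * (X 1 * σ) by ring,
      D.leibniz, D.leibniz, hσ0, hY, hDn2]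
    simp only [smul_eq_mul]
    ring
  have h3 : ∀ i : Fin 3, (⇑D)^[3] (X i) = 0 := by
    intro i
    fin_cases i
    · show D ((⇑D)^[2] (X 0)) = 0
      rw [h2X, show (-2 : MvPolynomial (Fin 3) ℂ) * X 2 * σ ^ 2 = (-2) * (X 2 * σ^2) by ring,
        D.leibniz, D.leibniz, D.leibniz_pow, hσ0, hZ, hDn2]
      simp
    · show D (D (D (X 1))) = 0
      rw [hY, D.leibniz, hσ0, hZ]
      simp
    · show D (D (D (X 2))) = 0
      rw [hZ]
      simp
  have hne : (⇑D)^[2] (X 0) ≠ 0 := by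
    rw [h2X, hσ]
    intro h
    have := congrArg (MvPolynomial.eval fun _ => (1 : ℂ)) h
    simp at this
  refine ⟨hσ0, h3, hne, ?_, ?_⟩
  · intro m hm
    by_contra hlt
    push_neg at hlt
    exact hne (iter_mono D (Nat.lt_succ_iff.mp hlt) (hm 0))
  · intro a
    induction a using MvPolynomial.induction_on with
    | C c =>
      exact ⟨1, by simp [Function.iterate_one, D.map_algebraMap c]⟩
    | add p q hp hq =>
      obtain ⟨n, hn⟩ := hp
      obtain ⟨m, hm⟩ := hq
      exact ⟨max n m, by
        rw [iter_add, iter_mono D (le_max_left n m) hn,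
          iter_mono D (le_max_right n m) hm, add_zero]⟩
    | mul_X p i hp =>
      obtain ⟨n, hn⟩ := hp
      exact ⟨n + 3, nilmul D (n + 3) n 3 p (X i) rfl hn (h3 i)⟩
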